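/- Let H be a countable type (of trajectories), let p, q : H → ℝ be probability mass functions (nonnegative functions each summing to 1 over H) such that q is absolutely continuous with respect to p (i.e. q τ > 0 implies p τ > 0), and let γ ∈ (0,1). Let r : ℕ → H → ℝ satisfy r t τ > 0 for all t and τ, and define the discounted return R τ = ∑_{t=0}^∞ γ^t · r t τ, assumed to be a convergent series for every τ. Assume moreover that τ ↦ p τ · R τ is summable, that for every τ with q τ > 0 the series ∑_{t=0}^∞ (1−γ) γ^t · log(r t τ) converges, and that both τ ↦ q τ · (log(R τ) + log(p τ / q τ)) and τ ↦ q τ · (∑_{t=0}^∞ (1−γ) γ^t · log(r t τ) + log(p τ / q τ)) are summable. Then log(∑_τ p τ · R τ) ≥ ∑_τ q τ · (∑_{t=0}^∞ (1−γ) γ^t · log(r t τ) + log(p τ / q τ)). -/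

import Mathlib

/-- Jensen's inequality for `Real.log` over a countable weighted sum. -/
lemma log_jensen_tsum {ι : Type*} (w x : ι → ℝ) (hw0 : ∀ i, 0 ≤ w i)
    (hw : Summable w) (hw1 : ∑' i, w i = 1)
    (hx : ∀ i, 0 < w i → 0 < x i)
    (hwx : Summable fun i => w i * x i)
    (hm : 0 < ∑' i, w i * x i)
    (hwl : Summable fun i => w i * Real.log (x i)) :
    ∑' i, w i * Real.log (x i) ≤ Real.log (∑' i, w i * x i) := by
  set m := ∑' i, w i * x i with hmdef
  have key : ∀ i, w i * Real.log (x i) ≤ w i * Real.log m + w i * x i / m - w i := by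
    intro i
    rcases eq_or_lt_of_le (hw0 i) with h | h
    · simp [← h]
    · have hxi := hx i h
      have h1 : Real.log (x i) ≤ Real.log m + (x i / m - 1) := by
        have h2 := Real.log_le_sub_one_of_pos (div_pos hxi hm)
        rw [Real.log_div hxi.ne' hm.ne'] at h2
        linarith
      calc w i * Real.log (x i) ≤ w i * (Real.log m + (x i / m - 1)) :=
            mul_le_mul_of_nonneg_left h1 (hw0 i)
        _ = w i * Real.log m + w i * x i / m - w i := by ring
  have hs1 : Summable fun i => w i * Real.log m := hw.mul_right _
  have hs2 : Summable fun i => w i * x i / m := hwx.div_const m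
  have hs : Summable fun i => w i * Real.log m + w i * x i / m - w i :=
    (hs1.add hs2).sub hw
  calc ∑' i, w i * Real.log (x i)
      ≤ ∑' i, (w i * Real.log m + w i * x i / m - w i) := Summable.tsum_le_tsum key hwl hs
    _ = Real.log m := by
        rw [Summable.tsum_sub (hs1.add hs2) hw, Summable.tsum_add hs1 hs2, tsum_mul_right, tsum_div_const,
          hw1, ← hmdef]
        field_simp
        ring

/-- Abstract distributional form of Theorem 1 (SAMBO-RL): the log of the true
objective `∑ τ, p τ * R τ` is bounded below by the shifts-aware surrogate
objective `∑ τ, q τ * (∑ t, (1-γ) γ^t log (r t τ) + log (p τ / q τ))`. -/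
theorem sambo_theorem1_distributional
    {H : Type*} [Countable H]
    (p q : H → ℝ)
    (hp0 : ∀ τ, 0 ≤ p τ) (hp1 : ∑' τ, p τ = 1)
    (hq0 : ∀ τ, 0 ≤ q τ) (hq1 : ∑' τ, q τ = 1)
    (habs : ∀ τ, 0 < q τ → 0 < p τ)
    (γ : ℝ) (hγ0 : 0 < γ) (hγ1 : γ < 1)
    (r : ℕ → H → ℝ) (hr : ∀ t τ, 0 < r t τ)
    (R : H → ℝ) (hR : ∀ τ, R τ = ∑' t : ℕ, γ ^ t * r t τ)
    (hRconv : ∀ τ, Summable fun t : ℕ => γ ^ t * r t τ)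
    (hpR : Summable fun τ => p τ * R τ)
    (hlogconv : ∀ τ, 0 < q τ →
      Summable fun t : ℕ => (1 - γ) * γ ^ t * Real.log (r t τ))
    (hsum1 : Summable fun τ => q τ * (Real.log (R τ) + Real.log (p τ / q τ)))
    (hsum2 : Summable fun τ =>
      q τ * ((∑' t : ℕ, (1 - γ) * γ ^ t * Real.log (r t τ)) + Real.log (p τ / q τ))) :
    Real.log (∑' τ, p τ * R τ) ≥
      ∑' τ, q τ * ((∑' t : ℕ, (1 - γ) * γ ^ t * Real.log (r t τ)) + Real.log (p τ / q τ)) := by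
  have hγ1' : 0 < 1 - γ := by linarith
  have hRpos : ∀ τ, 0 < R τ := by
    intro τ
    rw [hR τ]
    exact Summable.tsum_pos (hRconv τ) (fun t => (mul_pos (pow_pos hγ0 t) (hr t τ)).le) 0
      (mul_pos (pow_pos hγ0 0) (hr 0 τ))
  -- Step A: for q τ > 0, the inner discounted log-sum is ≤ log (R τ)
  have stepA : ∀ τ, 0 < q τ →
      (∑' t : ℕ, (1 - γ) * γ ^ t * Real.log (r t τ)) ≤ Real.log (R τ) := by
    intro τ hqτ
    have hwgeo : Summable fun t : ℕ => (1 - γ) * γ ^ t :=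
      (summable_geometric_of_lt_one hγ0.le hγ1).mul_left _
    have hw1 : (∑' t : ℕ, (1 - γ) * γ ^ t) = 1 := by
      rw [tsum_mul_left, tsum_geometric_of_lt_one hγ0.le hγ1]
      field_simp
    have hwx : Summable fun t : ℕ => (1 - γ) * γ ^ t * (r t τ) := by
      have := (hRconv τ).mul_left (1 - γ)
      simpa [mul_assoc] using this
    have hmτ : 0 < ∑' t : ℕ, (1 - γ) * γ ^ t * r t τ :=
      Summable.tsum_pos hwx (fun t => (mul_pos (mul_pos hγ1' (pow_pos hγ0 t)) (hr t τ)).le) 0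
        (mul_pos (mul_pos hγ1' (pow_pos hγ0 0)) (hr 0 τ))
    have hwl : Summable fun t : ℕ => (1 - γ) * γ ^ t * Real.log (r t τ) := hlogconv τ hqτ
    have hjen := log_jensen_tsum (fun t => (1 - γ) * γ ^ t) (fun t => r t τ)
      (fun t => by positivity) hwgeo hw1 (fun t _ => hr t τ) hwx hmτ hwl
    have hmval : (∑' t : ℕ, (1 - γ) * γ ^ t * r t τ) = (1 - γ) * R τ := by
      rw [hR τ, ← tsum_mul_left]
      exact tsum_congr fun t => by ring
    calc (∑' t : ℕ, (1 - γ) * γ ^ t * Real.log (r t τ))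
        ≤ Real.log (∑' t : ℕ, (1 - γ) * γ ^ t * r t τ) := hjen
      _ = Real.log (1 - γ) + Real.log (R τ) := by
          rw [hmval, Real.log_mul hγ1'.ne' (hRpos τ).ne']
      _ ≤ Real.log (R τ) := by
          have : Real.log (1 - γ) ≤ 0 := Real.log_nonpos (by linarith) (by linarith)
          linarith
  -- Compare the two τ-sums termwise
  have hle12 : (∑' τ, q τ * ((∑' t : ℕ, (1 - γ) * γ ^ t * Real.log (r t τ)) +
      Real.log (p τ / q τ))) ≤ ∑' τ, q τ * (Real.log (R τ) + Real.log (p τ / q τ)) := by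
    refine Summable.tsum_le_tsum (fun τ => ?_) hsum2 hsum1
    rcases eq_or_lt_of_le (hq0 τ) with h | h
    · simp [← h]
    · have := stepA τ h
      have := mul_le_mul_of_nonneg_left (add_le_add_right this (Real.log (p τ / q τ))) (hq0 τ)
      linarith
  -- Step B: Jensen over τ with x τ = p τ * R τ / q τ
  have hqsum : Summable q := by
    by_contra h
    rw [tsum_eq_zero_of_not_summable h] at hq1
    norm_num at hq1
  have hwx : Summable fun τ => q τ * (p τ * R τ / q τ) := by
    refine Summable.of_nonneg_of_le (fun τ => ?_) (fun τ => ?_) hpR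
    · rcases eq_or_lt_of_le (hq0 τ) with h | h
      · simp [← h]
      · exact (mul_pos h (div_pos (mul_pos (habs τ h) (hRpos τ)) h)).le
    · rcases eq_or_lt_of_le (hq0 τ) with h | h
      · simp [← h]
        exact mul_nonneg (hp0 τ) (hRpos τ).le
      · rw [mul_div_cancel₀ _ h.ne']
  have hτ0 : ∃ τ, 0 < q τ := by
    by_contra h
    push_neg at h
    have : ∀ τ, q τ = 0 := fun τ => le_antisymm (h τ) (hq0 τ)
    rw [tsum_congr this] at hq1
    simp at hq1
  obtain ⟨τ0, hτ0⟩ := hτ0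
  have hm : 0 < ∑' τ, q τ * (p τ * R τ / q τ) := by
    refine Summable.tsum_pos hwx (fun τ => ?_) τ0 ?_
    · rcases eq_or_lt_of_le (hq0 τ) with h | h
      · simp [← h]
      · exact (mul_pos h (div_pos (mul_pos (habs τ h) (hRpos τ)) h)).le
    · exact mul_pos hτ0 (div_pos (mul_pos (habs τ0 hτ0) (hRpos τ0)) hτ0)
  have eqB : ∀ τ, q τ * (Real.log (R τ) + Real.log (p τ / q τ)) =
      q τ * Real.log (p τ * R τ / q τ) := by
    intro τ
    rcases eq_or_lt_of_le (hq0 τ) with h | h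
    · simp [← h]
    · have hpτ := habs τ h
      rw [Real.log_div (mul_pos hpτ (hRpos τ)).ne' h.ne', Real.log_mul hpτ.ne' (hRpos τ).ne',
        Real.log_div hpτ.ne' h.ne']
      ring
  have hwl : Summable fun τ => q τ * Real.log (p τ * R τ / q τ) :=
    hsum1.congr eqB
  have hjenB := log_jensen_tsum q (fun τ => p τ * R τ / q τ) hq0 hqsum hq1
    (fun τ h => div_pos (mul_pos (habs τ h) (hRpos τ)) h) hwx hm hwl
  have hmle : (∑' τ, q τ * (p τ * R τ / q τ)) ≤ ∑' τ, p τ * R τ := by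
    refine Summable.tsum_le_tsum (fun τ => ?_) hwx hpR
    rcases eq_or_lt_of_le (hq0 τ) with h | h
    · simp [← h]
      exact mul_nonneg (hp0 τ) (hRpos τ).le
    · rw [mul_div_cancel₀ _ h.ne']
  calc (∑' τ, q τ * ((∑' t : ℕ, (1 - γ) * γ ^ t * Real.log (r t τ)) + Real.log (p τ / q τ)))
      ≤ ∑' τ, q τ * (Real.log (R τ) + Real.log (p τ / q τ)) := hle12
    _ = ∑' τ, q τ * Real.log (p τ * R τ / q τ) := tsum_congr eqB
    _ ≤ Real.log (∑' τ, q τ * (p τ * R τ / q τ)) := hjenB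
    _ ≤ Real.log (∑' τ, p τ * R τ) := Real.log_le_log hm hmle
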